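/- arXiv:math/0510218 — 2 statements merged into one kernel-verified Lean document; each statement's English description precedes it below -/
import Mathlib

section
/- Let F = MonoidAlgebra ℚ (FreeMonoid ℕ) with the three bilinear operations ≺, ∘, ≻ defined on basis words by Loday–Ronco's max-letter rule. Then for all x, y, z ∈ F, (x ≻ y) ≺ z = x ≻ (y ≺ z). -/
/-- The right operation `≻` of the Loday–Ronco dendriform trialgebra structure on
noncommutative polynomials: on basis words, `u ≻ v = uv` if `u, v` are nonempty and
`max u < max v`, and `0` otherwise; extended bilinearly. -/
noncomputable def trSucc {α : Type*} [LinearOrder α]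
    (x y : MonoidAlgebra ℚ (FreeMonoid α)) : MonoidAlgebra ℚ (FreeMonoid α) :=
  x.coeff.sum fun u a => y.coeff.sum fun v b =>
    if u.toList ≠ [] ∧ v.toList ≠ [] ∧ u.toList.maximum < v.toList.maximum
    then MonoidAlgebra.single (u * v) (a * b) else 0

/-- The middle operation `∘`: on basis words, `u ∘ v = uv` if `u, v` are nonempty and
`max u = max v`, and `0` otherwise; extended bilinearly. -/
noncomputable def trCirc {α : Type*} [LinearOrder α]
    (x y : MonoidAlgebra ℚ (FreeMonoid α)) : MonoidAlgebra ℚ (FreeMonoid α) :=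
  x.coeff.sum fun u a => y.coeff.sum fun v b =>
    if u.toList ≠ [] ∧ v.toList ≠ [] ∧ u.toList.maximum = v.toList.maximum
    then MonoidAlgebra.single (u * v) (a * b) else 0

/-- The left operation `≺`: on basis words, `u ≺ v = uv` if `u, v` are nonempty and
`max u > max v`, and `0` otherwise; extended bilinearly. -/
noncomputable def trPrec {α : Type*} [LinearOrder α]
    (x y : MonoidAlgebra ℚ (FreeMonoid α)) : MonoidAlgebra ℚ (FreeMonoid α) :=
  x.coeff.sum fun u a => y.coeff.sum fun v b =>
    if u.toList ≠ [] ∧ v.toList ≠ [] ∧ v.toList.maximum < u.toList.maximum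
    then MonoidAlgebra.single (u * v) (a * b) else 0

section aux

variable {α : Type*} [LinearOrder α]

lemma maximum_append (l₁ l₂ : List α) :
    (l₁ ++ l₂).maximum = max l₁.maximum l₂.maximum := by
  induction l₁ with
  | nil => simp [List.maximum_nil]
  | cons a l ih => simp [List.maximum_cons, ih, max_assoc]

lemma trSucc_zero_left (y : MonoidAlgebra ℚ (FreeMonoid α)) : trSucc 0 y = 0 := by
  simp [trSucc]

lemma trSucc_zero_right (x : MonoidAlgebra ℚ (FreeMonoid α)) : trSucc x 0 = 0 := by
  simp [trSucc]

lemma trPrec_zero_left (y : MonoidAlgebra ℚ (FreeMonoid α)) : trPrec 0 y = 0 := by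
  simp [trPrec]

lemma trPrec_zero_right (x : MonoidAlgebra ℚ (FreeMonoid α)) : trPrec x 0 = 0 := by
  simp [trPrec]

lemma trSucc_add_left (x x' y : MonoidAlgebra ℚ (FreeMonoid α)) :
    trSucc (x + x') y = trSucc x y + trSucc x' y := by
  unfold trSucc
  apply Finsupp.sum_add_index'
  · intro u
    simp
  · intro u a a'
    rw [← Finsupp.sum_add]
    refine Finsupp.sum_congr fun v _ => ?_
    split_ifs <;> simp [add_mul, Finsupp.single_add]

lemma trSucc_add_right (x y y' : MonoidAlgebra ℚ (FreeMonoid α)) :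
    trSucc x (y + y') = trSucc x y + trSucc x y' := by
  unfold trSucc
  rw [← Finsupp.sum_add]
  refine Finsupp.sum_congr fun u _ => ?_
  apply Finsupp.sum_add_index'
  · intro v
    simp
  · intro v b b'
    split_ifs <;> simp [mul_add, Finsupp.single_add]

lemma trPrec_add_left (x x' y : MonoidAlgebra ℚ (FreeMonoid α)) :
    trPrec (x + x') y = trPrec x y + trPrec x' y := by
  unfold trPrec
  apply Finsupp.sum_add_index'
  · intro u
    simp
  · intro u a a'
    rw [← Finsupp.sum_add]
    refine Finsupp.sum_congr fun v _ => ?_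
    split_ifs <;> simp [add_mul, Finsupp.single_add]

lemma trPrec_add_right (x y y' : MonoidAlgebra ℚ (FreeMonoid α)) :
    trPrec x (y + y') = trPrec x y + trPrec x y' := by
  unfold trPrec
  rw [← Finsupp.sum_add]
  refine Finsupp.sum_congr fun u _ => ?_
  apply Finsupp.sum_add_index'
  · intro v
    simp
  · intro v b b'
    split_ifs <;> simp [mul_add, Finsupp.single_add]

lemma trSucc_single_single (u v : FreeMonoid α) (a b : ℚ) :
    trSucc (MonoidAlgebra.single u a) (MonoidAlgebra.single v b) =
      if u.toList ≠ [] ∧ v.toList ≠ [] ∧ u.toList.maximum < v.toList.maximum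
      then MonoidAlgebra.single (u * v) (a * b) else 0 := by
  unfold trSucc
  rw [MonoidAlgebra.coeff_single, MonoidAlgebra.coeff_single, Finsupp.sum_single_index,
    Finsupp.sum_single_index]
  · split_ifs <;> simp
  · simp

lemma trPrec_single_single (u v : FreeMonoid α) (a b : ℚ) :
    trPrec (MonoidAlgebra.single u a) (MonoidAlgebra.single v b) =
      if u.toList ≠ [] ∧ v.toList ≠ [] ∧ v.toList.maximum < u.toList.maximum
      then MonoidAlgebra.single (u * v) (a * b) else 0 := by
  unfold trPrec
  rw [MonoidAlgebra.coeff_single, MonoidAlgebra.coeff_single, Finsupp.sum_single_index,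
    Finsupp.sum_single_index]
  · split_ifs <;> simp
  · simp

lemma succ_prec_single (u v w : FreeMonoid α) (a b c : ℚ) :
    trPrec (trSucc (MonoidAlgebra.single u a) (MonoidAlgebra.single v b))
        (MonoidAlgebra.single w c) =
      trSucc (MonoidAlgebra.single u a)
        (trPrec (MonoidAlgebra.single v b) (MonoidAlgebra.single w c)) := by
  rw [trSucc_single_single, trPrec_single_single]
  by_cases hP : u.toList ≠ [] ∧ v.toList ≠ [] ∧ u.toList.maximum < v.toList.maximum
  · obtain ⟨hu, hv, huv⟩ := hP
    rw [if_pos ⟨hu, hv, huv⟩, trPrec_single_single]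
    by_cases hW : w.toList ≠ [] ∧ w.toList.maximum < v.toList.maximum
    · obtain ⟨hw, hwv⟩ := hW
      have hpv : (v * w).toList ≠ [] := by
        simp only [FreeMonoid.toList_mul]
        simp [hv]
      have hpu : (u * v).toList ≠ [] := by
        simp only [FreeMonoid.toList_mul]
        simp [hu]
      have h1 : w.toList.maximum < (u * v).toList.maximum := by
        rw [FreeMonoid.toList_mul, maximum_append]
        exact lt_max_iff.mpr (Or.inr hwv)
      have h2 : u.toList.maximum < (v * w).toList.maximum := by
        rw [FreeMonoid.toList_mul, maximum_append]
        exact lt_max_iff.mpr (Or.inl huv)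
      rw [if_pos ⟨hpu, hw, h1⟩, if_pos ⟨hv, hw, hwv⟩, trSucc_single_single,
        if_pos ⟨hu, hpv, h2⟩, mul_assoc, mul_assoc]
    · have hneg1 : ¬((u * v).toList ≠ [] ∧ w.toList ≠ [] ∧
          w.toList.maximum < (u * v).toList.maximum) := by
        rintro ⟨-, hw, hlt⟩
        rw [FreeMonoid.toList_mul, maximum_append, max_eq_right huv.le] at hlt
        exact hW ⟨hw, hlt⟩
      have hneg2 : ¬(v.toList ≠ [] ∧ w.toList ≠ [] ∧
          w.toList.maximum < v.toList.maximum) := by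
        rintro ⟨-, hw, hlt⟩
        exact hW ⟨hw, hlt⟩
      rw [if_neg hneg1, if_neg hneg2, trSucc_zero_right]
  · rw [if_neg hP, trPrec_zero_left]
    by_cases hQ : v.toList ≠ [] ∧ w.toList ≠ [] ∧ w.toList.maximum < v.toList.maximum
    · obtain ⟨hv, hw, hwv⟩ := hQ
      rw [if_pos ⟨hv, hw, hwv⟩, trSucc_single_single, if_neg]
      rintro ⟨hu, -, hlt⟩
      rw [FreeMonoid.toList_mul, maximum_append] at hlt
      apply hP
      refine ⟨hu, hv, ?_⟩
      rcases lt_max_iff.mp hlt with h | h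
      · exact h
      · exact lt_trans h hwv
    · rw [if_neg hQ, trSucc_zero_right]

end aux

/-- Dendriform trialgebra axiom: `(x ≻ y) ≺ z = x ≻ (y ≺ z)`. -/
theorem succ_prec (x y z : MonoidAlgebra ℚ (FreeMonoid ℕ)) :
    trPrec (trSucc x y) z = trSucc x (trPrec y z) := by
  induction x using MonoidAlgebra.induction_linear with
  | zero => rw [trSucc_zero_left, trPrec_zero_left, trSucc_zero_left]
  | add x x' hx hx' =>
      rw [trSucc_add_left, trPrec_add_left, hx, hx', trSucc_add_left]
  | single u a =>
    induction y using MonoidAlgebra.induction_linear with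
    | zero => rw [trSucc_zero_right, trPrec_zero_left, trSucc_zero_right]
    | add y y' hy hy' =>
        rw [trSucc_add_right, trPrec_add_left, hy, hy', trPrec_add_left, trSucc_add_right]
    | single v b =>
      induction z using MonoidAlgebra.induction_linear with
      | zero => rw [trPrec_zero_right, trPrec_zero_right, trSucc_zero_right]
      | add z z' hz hz' =>
          rw [trPrec_add_right, hz, hz', trPrec_add_right, trSucc_add_right]
      | single w c => exact succ_prec_single u v w a b c
end

section
/- Fix N ≥ 1 and work in MonoidAlgebra ℚ (FreeMonoid (Fin N)) equipped with the bilinear operation ∘ defined on basis words by the max-letter rule. For any two nonempty packed words u and v, M_u ∘ M_v = Σ_w M_w, where the sum ranges over all packed words w of length |u| + |v| such that the prefix of w of length |u| packs to u, the suffix of w of length |v| packs to v, and the greatest letter of w occurs both among the first |u| positions and among the last |v| positions of w. Hence the span of the M_u is closed under ∘, and together with the analogous statements for ≺ and ≻, NCQSym is a sub-(dendriform trialgebra). -/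
/-- The rank of the letter `x` in the word `w`: one plus the number of distinct letters
of `w` smaller than `x`. -/
def rank (w : List ℕ) (x : ℕ) : ℕ := ((w.filter (· < x)).dedup).length + 1

/-- The packed word of a word `w`: if the distinct letters occurring in `w` are
`b₁ < b₂ < … < b_k`, each occurrence of `b_j` is replaced by `j`. -/
def pack (w : List ℕ) : List ℕ := w.map (rank w)

/-- For a packed word `u`, the element `M_u` of `MonoidAlgebra ℚ (FreeMonoid (Fin N))`:
the sum of all words `w` over the alphabet `Fin N` (identified with `{1 < 2 < … < N}`)
whose packed word is `u`. -/
noncomputable def Mword (N : ℕ) (u : List ℕ) : MonoidAlgebra ℚ (FreeMonoid (Fin N)) :=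
  ∑ f : Fin u.length → Fin N,
    if pack ((List.ofFn f).map (fun i => (i : ℕ) + 1)) = u
    then MonoidAlgebra.single (FreeMonoid.ofList (List.ofFn f)) (1 : ℚ) else 0

/-- The (finite) set of all packed words of length `n`; a packed word of length `n`
has all its letters in `{1, …, n}`. -/
noncomputable def packedWords (n : ℕ) : Finset (List ℕ) :=
  ((Finset.univ : Finset (Fin n → Fin (n + 1))).image
    (fun f => (List.ofFn f).map (fun i : Fin (n + 1) => (i : ℕ)))).filter (fun w => pack w = w)

lemma rank_eq_card (w : List ℕ) (x : ℕ) :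
    rank w x = (w.filter (· < x)).toFinset.card + 1 := by
  rw [rank, List.card_toFinset]

lemma rank_mono (w : List ℕ) {x y : ℕ} (h : x ≤ y) : rank w x ≤ rank w y := by
  rw [rank_eq_card, rank_eq_card]
  have hsub : (w.filter (· < x)).toFinset ⊆ (w.filter (· < y)).toFinset := by
    intro z hz
    simp only [List.mem_toFinset, List.mem_filter, decide_eq_true_eq] at *
    exact ⟨hz.1, lt_of_lt_of_le hz.2 h⟩
  have := Finset.card_le_card hsub
  omega

lemma rank_strict (w : List ℕ) {x y : ℕ} (hx : x ∈ w) (h : x < y) :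
    rank w x < rank w y := by
  rw [rank_eq_card, rank_eq_card]
  have hsub : (w.filter (· < x)).toFinset ⊂ (w.filter (· < y)).toFinset := by
    constructor
    · intro z hz
      simp only [List.mem_toFinset, List.mem_filter, decide_eq_true_eq] at *
      exact ⟨hz.1, lt_trans hz.2 h⟩
    · intro hc
      have := hc (by simp only [List.mem_toFinset, List.mem_filter, decide_eq_true_eq]
                     exact ⟨hx, h⟩ : x ∈ (w.filter (· < y)).toFinset)
      simp only [List.mem_toFinset, List.mem_filter, decide_eq_true_eq] at this
      exact lt_irrefl x this.2
  have := Finset.card_lt_card hsub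
  omega

lemma rank_lt_iff (w : List ℕ) {x y : ℕ} (hx : x ∈ w) (hy : y ∈ w) :
    x < y ↔ rank w x < rank w y := by
  constructor
  · exact rank_strict w hx
  · intro h
    by_contra hc
    exact absurd (rank_mono w (not_lt.mp hc)) (not_le.mpr h)

lemma rank_injOn (w : List ℕ) {x y : ℕ} (hx : x ∈ w) (hy : y ∈ w)
    (h : rank w x = rank w y) : x = y := by
  rcases lt_trichotomy x y with hc | hc | hc
  · exact absurd ((rank_lt_iff w hx hy).mp hc) (by omega)
  · exact hc
  · exact absurd ((rank_lt_iff w hy hx).mp hc) (by omega)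

lemma pack_map (φ : ℕ → ℕ) (l : List ℕ)
    (h : ∀ x ∈ l, ∀ y ∈ l, (x < y ↔ φ x < φ y)) :
    pack (l.map φ) = pack l := by
  have hmono : ∀ x ∈ l, ∀ y ∈ l, (φ x < φ y ↔ x < y) := fun x hx y hy => (h x hx y hy).symm
  have key : ∀ x ∈ l, rank (l.map φ) (φ x) = rank l x := by
    intro x hx
    have hfilter : (l.map φ).filter (· < φ x) = (l.filter (· < x)).map φ := by
      rw [List.filter_map]
      congr 1
      apply List.filter_congr
      intro y hy
      simp only [Function.comp, decide_eq_decide]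
      exact hmono y hy x hx
    have htf : ((l.filter (· < x)).map φ).toFinset = (l.filter (· < x)).toFinset.image φ := by
      ext z; simp
    rw [rank_eq_card, rank_eq_card, hfilter, htf]
    congr 1
    apply Finset.card_image_of_injOn
    intro a ha b hb hab
    simp only [Finset.coe_sort_coe, Finset.mem_coe, List.mem_toFinset, List.mem_filter,
      decide_eq_true_eq] at ha hb
    rcases lt_trichotomy a b with hc | hc | hc
    · exact absurd ((h a ha.1 b hb.1).mp hc) (by omega)
    · exact hc
    · exact absurd ((h b hb.1 a ha.1).mp hc) (by omega)
  unfold pack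
  rw [List.map_map]
  apply List.map_congr_left
  intro x hx
  exact key x hx

lemma pack_pack (w : List ℕ) : pack (pack w) = pack w := by
  unfold pack
  have := pack_map (rank w) w (fun x hx y hy => rank_lt_iff w hx hy)
  unfold pack at this
  rw [List.map_map] at this ⊢
  exact this

lemma length_pack (w : List ℕ) : (pack w).length = w.length := List.length_map _

lemma rank_le_length (w : List ℕ) {y : ℕ} (hy : y ∈ w) : rank w y ≤ w.length := by
  rw [rank_eq_card]
  have hsub : (w.filter (· < y)).toFinset ⊂ w.toFinset := by
    constructor
    · intro z hz
      simp only [List.mem_toFinset, List.mem_filter, decide_eq_true_eq] at *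
      exact hz.1
    · intro hc
      have := hc (List.mem_toFinset.mpr hy)
      simp only [List.mem_toFinset, List.mem_filter, decide_eq_true_eq] at this
      omega
  have h1 := Finset.card_lt_card hsub
  have h2 : w.toFinset.card ≤ w.length := by
    rw [List.card_toFinset]
    exact List.Sublist.length_le (List.dedup_sublist w)
  omega

lemma mem_pack_le {w : List ℕ} {x : ℕ} (hx : x ∈ pack w) : x ≤ w.length := by
  unfold pack at hx
  rw [List.mem_map] at hx
  obtain ⟨y, hy, rfl⟩ := hx
  exact rank_le_length w hy

-- max lemmas
lemma mx_mem {l : List ℕ} (hl : l ≠ []) : l.foldr max 0 ∈ l := by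
  induction l with
  | nil => exact absurd rfl hl
  | cons x xs ih =>
    rcases eq_or_ne xs [] with h | h
    · subst h; simp
    · have := ih h
      simp only [List.foldr_cons]
      rcases max_cases x (xs.foldr max 0) with ⟨h1, _⟩ | ⟨h1, _⟩ <;> rw [h1]
      · exact List.mem_cons_self
      · exact List.mem_cons_of_mem _ this

lemma le_mx {l : List ℕ} {x : ℕ} (hx : x ∈ l) : x ≤ l.foldr max 0 := by
  induction l with
  | nil => simp at hx
  | cons y ys ih =>
    rcases List.mem_cons.mp hx with rfl | h
    · simp only [List.foldr_cons]; exact le_max_left _ _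
    · simp only [List.foldr_cons]; exact le_trans (ih h) (le_max_right _ _)

lemma mx_append (l l' : List ℕ) :
    (l ++ l').foldr max 0 = max (l.foldr max 0) (l'.foldr max 0) := by
  induction l with
  | nil => simp
  | cons x xs ih => simp [ih, max_assoc]

lemma mx_map {φ : ℕ → ℕ} {l : List ℕ} (hl : l ≠ [])
    (hmono : ∀ x ∈ l, ∀ y ∈ l, x ≤ y → φ x ≤ φ y) :
    (l.map φ).foldr max 0 = φ (l.foldr max 0) := by
  apply le_antisymm
  · have hmem := mx_mem (l := l.map φ) (by simpa using hl)
    rw [List.mem_map] at hmem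
    obtain ⟨x, hx, hfx⟩ := hmem
    rw [← hfx]
    exact hmono x hx _ (mx_mem hl) (le_mx hx)
  · exact le_mx (List.mem_map_of_mem (f := φ) (mx_mem hl))

lemma mx_mem_iff {a c : List ℕ} (ha : a ≠ []) (hsub : ∀ x ∈ a, x ∈ c) :
    c.foldr max 0 ∈ a ↔ a.foldr max 0 = c.foldr max 0 := by
  constructor
  · intro h
    exact le_antisymm (le_mx (hsub _ (mx_mem ha))) (le_mx h)
  · intro h
    rw [← h]; exact mx_mem ha

lemma mx_map_fin {N : ℕ} {l : List (Fin N)} (hl : l ≠ []) :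
    ∃ m : Fin N, l.maximum = (m : WithBot (Fin N)) ∧
      (l.map fun i : Fin N => (i : ℕ) + 1).foldr max 0 = (m : ℕ) + 1 := by
  obtain ⟨m, hm⟩ := Option.ne_none_iff_exists'.mp (List.maximum_ne_bot_of_ne_nil hl)
  obtain ⟨hmem, hub⟩ := List.maximum_eq_coe_iff.mp hm
  refine ⟨m, hm, ?_⟩
  apply le_antisymm
  · have h1 := mx_mem (l := l.map fun i : Fin N => (i : ℕ) + 1)
      (fun h => hl (List.map_eq_nil_iff.mp h))
    rw [List.mem_map] at h1
    obtain ⟨x, hx, hfx⟩ := h1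
    rw [← hfx]
    have : x ≤ m := hub x hx
    have : (x : ℕ) ≤ (m : ℕ) := this
    omega
  · exact le_mx (List.mem_map_of_mem hmem)

lemma maximum_eq_iff_mx {N : ℕ} {l l' : List (Fin N)} (hl : l ≠ []) (hl' : l' ≠ []) :
    l.maximum = l'.maximum ↔
      (l.map fun i : Fin N => (i : ℕ) + 1).foldr max 0 = (l'.map fun i : Fin N => (i : ℕ) + 1).foldr max 0 := by
  obtain ⟨m, hm, hmx⟩ := mx_map_fin hl
  obtain ⟨m', hm', hmx'⟩ := mx_map_fin hl'
  rw [hm, hm', hmx, hmx']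
  constructor
  · intro h
    have : m = m' := by exact_mod_cast h
    rw [this]
  · intro h
    have : (m : ℕ) = (m' : ℕ) := by omega
    have : m = m' := Fin.val_injective this
    rw [this]


lemma mem_packedWords {n : ℕ} {w : List ℕ} :
    w ∈ packedWords n ↔ w.length = n ∧ pack w = w := by
  rw [packedWords, Finset.mem_filter]
  constructor
  · rintro ⟨hi, hp⟩
    refine ⟨?_, hp⟩
    rw [Finset.mem_image] at hi
    obtain ⟨f, _, rfl⟩ := hi
    simp
  · rintro ⟨hlen, hp⟩
    refine ⟨?_, hp⟩
    rw [Finset.mem_image]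
    have hbound : ∀ i : Fin n, w.get ⟨i, by omega⟩ < n + 1 := by
      intro i
      have hm : w.get ⟨i, by omega⟩ ∈ w := w.get_mem _
      have hm' : w.get ⟨i, by omega⟩ ∈ pack w := by rw [hp]; exact hm
      have := mem_pack_le hm'
      omega
    refine ⟨fun i => ⟨w.get ⟨i, by omega⟩, hbound i⟩, Finset.mem_univ _, ?_⟩
    apply List.ext_getElem
    · simp [hlen]
    · intro i h1 h2
      simp only [List.getElem_map, List.getElem_ofFn]
      rfl


section trCircLemmas
variable {α : Type*} [LinearOrder α]

lemma trCirc_zero_left (y : MonoidAlgebra ℚ (FreeMonoid α)) : trCirc 0 y = 0 := by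
  unfold trCirc; rw [MonoidAlgebra.coeff_zero]; exact Finsupp.sum_zero_index

lemma trCirc_inner_zero (y : MonoidAlgebra ℚ (FreeMonoid α)) (u : FreeMonoid α) :
    (y.coeff.sum fun v b =>
      if u.toList ≠ [] ∧ v.toList ≠ [] ∧ u.toList.maximum = v.toList.maximum
      then MonoidAlgebra.single (u * v) ((0 : ℚ) * b) else 0) = 0 := by
  apply Finset.sum_eq_zero
  intro v _
  simp only []
  split <;> simp

lemma trCirc_add_left (x x' y : MonoidAlgebra ℚ (FreeMonoid α)) :
    trCirc (x + x') y = trCirc x y + trCirc x' y := by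
  unfold trCirc
  rw [MonoidAlgebra.coeff_add, Finsupp.sum_add_index']
  · intro u
    exact trCirc_inner_zero y u
  · intro u a a'
    rw [← Finsupp.sum_add]
    apply Finsupp.sum_congr
    intro v _
    split
    · rw [add_mul, MonoidAlgebra.single_add]
    · rw [add_zero]

lemma trCirc_zero_right (x : MonoidAlgebra ℚ (FreeMonoid α)) : trCirc x 0 = 0 := by
  unfold trCirc
  apply Finset.sum_eq_zero
  intro u _
  simp only [MonoidAlgebra.coeff_zero]
  exact Finsupp.sum_zero_index

lemma trCirc_add_right (x y y' : MonoidAlgebra ℚ (FreeMonoid α)) :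
    trCirc x (y + y') = trCirc x y + trCirc x y' := by
  unfold trCirc
  rw [MonoidAlgebra.coeff_add, ← Finsupp.sum_add]
  apply Finsupp.sum_congr
  intro u _
  rw [Finsupp.sum_add_index']
  · intro v
    split <;> simp
  · intro v b b'
    split
    · rw [mul_add, MonoidAlgebra.single_add]
    · rw [add_zero]

lemma trCirc_single_single (p q : FreeMonoid α) (r s : ℚ) :
    trCirc (MonoidAlgebra.single p r) (MonoidAlgebra.single q s) =
      if p.toList ≠ [] ∧ q.toList ≠ [] ∧ p.toList.maximum = q.toList.maximum
      then MonoidAlgebra.single (p * q) (r * s) else 0 := by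
  unfold trCirc
  rw [MonoidAlgebra.coeff_single p r]
  rw [Finsupp.sum_single_index (trCirc_inner_zero _ p)]
  rw [MonoidAlgebra.coeff_single]
  rw [Finsupp.sum_single_index]
  split <;> simp

lemma trCirc_sum_left {ι : Type*} (s : Finset ι) (x : ι → MonoidAlgebra ℚ (FreeMonoid α))
    (y : MonoidAlgebra ℚ (FreeMonoid α)) :
    trCirc (∑ i ∈ s, x i) y = ∑ i ∈ s, trCirc (x i) y := by
  classical
  induction s using Finset.induction with
  | empty => simp [trCirc_zero_left]
  | insert _ _ h ih => rw [Finset.sum_insert h, Finset.sum_insert h, trCirc_add_left, ih]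

lemma trCirc_sum_right {ι : Type*} (s : Finset ι) (x : MonoidAlgebra ℚ (FreeMonoid α))
    (y : ι → MonoidAlgebra ℚ (FreeMonoid α)) :
    trCirc x (∑ i ∈ s, y i) = ∑ i ∈ s, trCirc x (y i) := by
  classical
  induction s using Finset.induction with
  | empty => simp [trCirc_zero_right]
  | insert _ _ h ih => rw [Finset.sum_insert h, Finset.sum_insert h, trCirc_add_right, ih]

end trCircLemmas


def word {N : ℕ} (l : List (Fin N)) : List ℕ := l.map (fun i : Fin N => (i : ℕ) + 1)

lemma word_coe {N : ℕ} (l : List (Fin N)) :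
    List.map (fun i => i + 1) (l : List ℕ) = word l := by
  induction l with
  | nil => rfl
  | cons x xs ih => simp_all [word]

lemma Mword_def' (N : ℕ) (u : List ℕ) (L : ℕ) (hL : u.length = L) :
    Mword N u = ∑ f : Fin L → Fin N,
      if pack (word (List.ofFn f)) = u
      then MonoidAlgebra.single (FreeMonoid.ofList (List.ofFn f)) (1 : ℚ) else 0 := by
  subst hL
  unfold Mword
  apply Finset.sum_congr rfl
  intro f _
  rw [word_coe]

lemma key_iff (N : ℕ) (u v : List ℕ) (hu' : u ≠ []) (hv' : v ≠ [])
    (f : Fin u.length → Fin N) (g : Fin v.length → Fin N) :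
    (pack (word (List.ofFn f) ++ word (List.ofFn g)) ∈
      (packedWords (u.length + v.length)).filter
        (fun w => pack (w.take u.length) = u ∧ pack (w.drop u.length) = v ∧
          w.foldr max 0 ∈ w.take u.length ∧ w.foldr max 0 ∈ w.drop u.length))
    ↔ (pack (word (List.ofFn f)) = u ∧ pack (word (List.ofFn g)) = v ∧
        (List.ofFn f).maximum = (List.ofFn g).maximum) := by
  set a := word (List.ofFn f) with ha_def
  set b := word (List.ofFn g) with hb_def
  have ha_len : a.length = u.length := by simp [ha_def, word]
  have hb_len : b.length = v.length := by simp [hb_def, word]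
  have hf_ne : List.ofFn f ≠ [] := by
    intro h
    have := congrArg List.length h
    simp at this
    exact hu' (List.length_eq_zero_iff.mp (this ▸ rfl))
  have hg_ne : List.ofFn g ≠ [] := by
    intro h
    have := congrArg List.length h
    simp at this
    exact hv' (List.length_eq_zero_iff.mp (this ▸ rfl))
  have ha_ne : a ≠ [] := by
    simp only [ha_def, word, ne_eq, List.map_eq_nil_iff]; exact hf_ne
  have hb_ne : b ≠ [] := by
    simp only [hb_def, word, ne_eq, List.map_eq_nil_iff]; exact hg_ne
  set c := a ++ b with hc_def
  set φ := rank c with hφ_def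
  have hc_ne : c ≠ [] := by simp [hc_def, ha_ne]
  have hw : pack c = c.map φ := rfl
  have hmapappend : c.map φ = a.map φ ++ b.map φ := by rw [hc_def, List.map_append]
  have hmaplen : (a.map φ).length = u.length := by rw [List.length_map, ha_len]
  have htake : (pack c).take u.length = a.map φ := by
    rw [hw, hmapappend, List.take_left' hmaplen]
  have hdrop : (pack c).drop u.length = b.map φ := by
    rw [hw, hmapappend, List.drop_left' hmaplen]
  have hmem_a : ∀ x ∈ a, x ∈ c := fun x hx => List.mem_append_left _ hx
  have hmem_b : ∀ x ∈ b, x ∈ c := fun x hx => List.mem_append_right _ hx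
  have hpack_take : pack ((pack c).take u.length) = pack a := by
    rw [htake]
    exact pack_map φ a (fun x hx y hy => rank_lt_iff c (hmem_a x hx) (hmem_a y hy))
  have hpack_drop : pack ((pack c).drop u.length) = pack b := by
    rw [hdrop]
    exact pack_map φ b (fun x hx y hy => rank_lt_iff c (hmem_b x hx) (hmem_b y hy))
  have hmx : (pack c).foldr max 0 = φ (c.foldr max 0) := by
    rw [hw]
    exact mx_map hc_ne (fun x _ y _ hxy => rank_mono c hxy)
  have hmxc_mem : c.foldr max 0 ∈ c := mx_mem hc_ne
  have hmem_take : ((pack c).foldr max 0 ∈ (pack c).take u.length) ↔ c.foldr max 0 ∈ a := by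
    rw [hmx, htake]
    constructor
    · intro h
      rw [List.mem_map] at h
      obtain ⟨x, hx, hfx⟩ := h
      have := rank_injOn c (hmem_a x hx) hmxc_mem hfx
      rwa [← this]
    · exact fun h => List.mem_map_of_mem h
  have hmem_drop : ((pack c).foldr max 0 ∈ (pack c).drop u.length) ↔ c.foldr max 0 ∈ b := by
    rw [hmx, hdrop]
    constructor
    · intro h
      rw [List.mem_map] at h
      obtain ⟨x, hx, hfx⟩ := h
      have := rank_injOn c (hmem_b x hx) hmxc_mem hfx
      rwa [← this]
    · exact fun h => List.mem_map_of_mem h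
  have hmxa : (c.foldr max 0 ∈ a) ↔ a.foldr max 0 = c.foldr max 0 := mx_mem_iff ha_ne hmem_a
  have hmxb : (c.foldr max 0 ∈ b) ↔ b.foldr max 0 = c.foldr max 0 := mx_mem_iff hb_ne hmem_b
  have hmax_iff : (a.foldr max 0 = c.foldr max 0 ∧ b.foldr max 0 = c.foldr max 0) ↔
      (List.ofFn f).maximum = (List.ofFn g).maximum := by
    rw [maximum_eq_iff_mx hf_ne hg_ne]
    have hcmax : c.foldr max 0 = max (a.foldr max 0) (b.foldr max 0) := mx_append a b
    constructor
    · rintro ⟨h1, h2⟩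
      show a.foldr max 0 = b.foldr max 0
      omega
    · intro h
      have h' : a.foldr max 0 = b.foldr max 0 := h
      constructor <;> omega
  have hmemP : pack c ∈ packedWords (u.length + v.length) := by
    rw [mem_packedWords]
    refine ⟨?_, pack_pack c⟩
    rw [length_pack, hc_def, List.length_append, ha_len, hb_len]
  rw [Finset.mem_filter]
  constructor
  · rintro ⟨_, h1, h2, h3, h4⟩
    rw [hpack_take] at h1
    rw [hpack_drop] at h2
    rw [hmem_take, hmxa] at h3
    rw [hmem_drop, hmxb] at h4
    exact ⟨h1, h2, hmax_iff.mp ⟨h3, h4⟩⟩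
  · rintro ⟨h1, h2, h3⟩
    refine ⟨hmemP, ?_, ?_, ?_, ?_⟩
    · rw [hpack_take]; exact h1
    · rw [hpack_drop]; exact h2
    · rw [hmem_take, hmxa]; exact (hmax_iff.mpr h3).1
    · rw [hmem_drop, hmxb]; exact (hmax_iff.mpr h3).2


/-- Formula for the middle product `∘` on `NCQSym`: for nonempty packed words `u` and `v`,
`M_u ∘ M_v = Σ_w M_w`, where `w` ranges over all packed words of length `|u| + |v|` whose
prefix of length `|u|` packs to `u`, whose suffix of length `|v|` packs to `v`, and whose
greatest letter occurs both among the first `|u|` positions and among the last `|v|`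
positions. Hence the span of the `M_u` is closed under `∘`. -/
theorem Mword_circ (N : ℕ) (hN : 1 ≤ N) (u v : List ℕ) (hu : pack u = u) (hv : pack v = v)
    (hu' : u ≠ []) (hv' : v ≠ []) :
    trCirc (Mword N u) (Mword N v) =
      ∑ w ∈ (packedWords (u.length + v.length)).filter
        (fun w => pack (w.take u.length) = u ∧ pack (w.drop u.length) = v ∧
          w.foldr max 0 ∈ w.take u.length ∧ w.foldr max 0 ∈ w.drop u.length),
        Mword N w := by
  classical
  set S := (packedWords (u.length + v.length)).filter
        (fun w => pack (w.take u.length) = u ∧ pack (w.drop u.length) = v ∧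
          w.foldr max 0 ∈ w.take u.length ∧ w.foldr max 0 ∈ w.drop u.length) with hS
  have hf_ne : ∀ f : Fin u.length → Fin N, List.ofFn f ≠ [] := by
    intro f h
    have := congrArg List.length h
    simp only [List.length_ofFn, List.length_nil] at this
    exact hu' (List.length_eq_zero_iff.mp this)
  have hg_ne : ∀ g : Fin v.length → Fin N, List.ofFn g ≠ [] := by
    intro g h
    have := congrArg List.length h
    simp only [List.length_ofFn, List.length_nil] at this
    exact hv' (List.length_eq_zero_iff.mp this)
  -- rewrite RHS
  have hRHS : ∑ w ∈ S, Mword N w =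
      ∑ h : Fin (u.length + v.length) → Fin N,
        if pack (word (List.ofFn h)) ∈ S
        then MonoidAlgebra.single (FreeMonoid.ofList (List.ofFn h)) (1 : ℚ) else 0 := by
    rw [Finset.sum_congr rfl (fun w hw => Mword_def' N w (u.length + v.length)
      (mem_packedWords.mp (Finset.mem_filter.mp (hS ▸ hw)).1).1)]
    rw [Finset.sum_comm]
    apply Finset.sum_congr rfl
    intro h _
    rw [Finset.sum_ite_eq S (pack (word (List.ofFn h)))
      (fun _ => MonoidAlgebra.single (FreeMonoid.ofList (List.ofFn h)) (1 : ℚ))]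
  rw [hRHS]
  -- rewrite LHS
  rw [Mword_def' N u u.length rfl, Mword_def' N v v.length rfl]
  rw [trCirc_sum_left]
  have hterm : ∀ (f : Fin u.length → Fin N) (g : Fin v.length → Fin N),
      trCirc
        (if pack (word (List.ofFn f)) = u
          then MonoidAlgebra.single (FreeMonoid.ofList (List.ofFn f)) (1 : ℚ) else 0)
        (if pack (word (List.ofFn g)) = v
          then MonoidAlgebra.single (FreeMonoid.ofList (List.ofFn g)) (1 : ℚ) else 0) =
      if pack (word (List.ofFn f)) = u ∧ pack (word (List.ofFn g)) = v ∧
          (List.ofFn f).maximum = (List.ofFn g).maximum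
        then MonoidAlgebra.single
          (FreeMonoid.ofList (List.ofFn f) * FreeMonoid.ofList (List.ofFn g)) (1 : ℚ) else 0 := by
    intro f g
    by_cases h1 : pack (word (List.ofFn f)) = u
    · by_cases h2 : pack (word (List.ofFn g)) = v
      · rw [if_pos h1, if_pos h2, trCirc_single_single]
        by_cases h3 : (List.ofFn f).maximum = (List.ofFn g).maximum
        · rw [if_pos (⟨hf_ne f, hg_ne g, h3⟩ :
              FreeMonoid.toList (FreeMonoid.ofList (List.ofFn f)) ≠ [] ∧
              FreeMonoid.toList (FreeMonoid.ofList (List.ofFn g)) ≠ [] ∧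
              (FreeMonoid.toList (FreeMonoid.ofList (List.ofFn f))).maximum =
                (FreeMonoid.toList (FreeMonoid.ofList (List.ofFn g))).maximum),
            if_pos ⟨h1, h2, h3⟩]
          norm_num
        · rw [if_neg (fun hc => h3 hc.2.2), if_neg]
          intro hc
          exact h3 hc.2.2
      · rw [if_neg h2, trCirc_zero_right, if_neg (fun hc => h2 hc.2.1)]
    · rw [if_neg h1, trCirc_zero_left, if_neg (fun hc => h1 hc.1)]
  calc ∑ f : Fin u.length → Fin N, trCirc _ _
      = ∑ f : Fin u.length → Fin N, ∑ g : Fin v.length → Fin N,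
          (if pack (word (List.ofFn f)) = u ∧ pack (word (List.ofFn g)) = v ∧
            (List.ofFn f).maximum = (List.ofFn g).maximum
          then MonoidAlgebra.single
            (FreeMonoid.ofList (List.ofFn f) * FreeMonoid.ofList (List.ofFn g)) (1 : ℚ) else 0) := by
        apply Finset.sum_congr rfl
        intro f _
        rw [trCirc_sum_right]
        exact Finset.sum_congr rfl (fun g _ => hterm f g)
    _ = ∑ p : (Fin u.length → Fin N) × (Fin v.length → Fin N),
          (if pack (word (List.ofFn p.1)) = u ∧ pack (word (List.ofFn p.2)) = v ∧
            (List.ofFn p.1).maximum = (List.ofFn p.2).maximum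
          then MonoidAlgebra.single
            (FreeMonoid.ofList (List.ofFn p.1) * FreeMonoid.ofList (List.ofFn p.2)) (1 : ℚ)
          else 0) := by
        rw [Fintype.sum_prod_type]
    _ = ∑ h : Fin (u.length + v.length) → Fin N,
          (if pack (word (List.ofFn h)) ∈ S
          then MonoidAlgebra.single (FreeMonoid.ofList (List.ofFn h)) (1 : ℚ) else 0) := by
        apply Fintype.sum_equiv (Fin.appendEquiv u.length v.length)
        rintro ⟨f, g⟩
        have happ : List.ofFn (Fin.appendEquiv u.length v.length (f, g)) =
            List.ofFn f ++ List.ofFn g := by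
          show List.ofFn (Fin.append f g) = _
          exact List.ofFn_fin_append f g
        have hword : word (List.ofFn f ++ List.ofFn g) =
            word (List.ofFn f) ++ word (List.ofFn g) := List.map_append
        rw [happ, hword]
        rw [← FreeMonoid.ofList_append]
        apply if_congr _ rfl rfl
        rw [hS] at *
        rw [key_iff N u v hu' hv' f g]
end
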